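/- arXiv:1607.04750 — 2 statements merged into one kernel-verified Lean document; each statement's English description precedes it below -/
import Mathlib

section
/- Let Γ be a group, k a finite field of characteristic p, and α: Γ → k^× a character. Let k′ ⊂ k be the subfield generated by the values of α. Then k′(α) (the field k′ with Γ acting through α) is a simple F_p[Γ]-module. Moreover, if β: Γ → k^× is another character, then k′(α) is isomorphic to an F_p[Γ]-submodule of k(β) if and only if there is a field automorphism τ of k such that β = τ ∘ α. -/
noncomputable section
open Polynomial

/-- The `F_p[Γ]`-module structure `k(ψ)` on `k` attached to a character
`ψ : Γ → kˣ`: the group `Γ` acts on the additive group of `k` through `ψ` by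
multiplication. -/
def charRep (p : ℕ) {Γ : Type*} [Group Γ] (k : Type*) [Field k] [Algebra (ZMod p) k]
    (ψ : Γ →* kˣ) : Representation (ZMod p) Γ k where
  toFun g :=
    { toFun := fun x => (ψ g : k) * x
      map_add' := fun x y => mul_add _ x y
      map_smul' := fun c x => by simp [Algebra.smul_def]; ring }
  map_one' := by ext x; simp
  map_mul' g h := by ext x; simp [mul_assoc]

/-- `S` is (isomorphic to) a subquotient of `M` over the ring `R`. -/
def IsSubquotientOf (R : Type*) [Ring R] (S M : Type*) [AddCommGroup S] [Module R S]
    [AddCommGroup M] [Module R M] : Prop :=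
  ∃ (A B : Submodule R M), B ≤ A ∧
    Nonempty ((↥A ⧸ (Submodule.comap A.subtype B)) ≃ₗ[R] S)

namespace Stmt6

set_option linter.unusedSectionVars false
variable (p : ℕ) [Fact p.Prime] {Γ : Type} [Group Γ] {k : Type} [Field k] [Finite k]
  [CharP k p] [Algebra (ZMod p) k]

lemma algebraMap_eq_natCast (c : ZMod p) : algebraMap (ZMod p) k c = ((c.val : ℕ) : k) := by
  have h : algebraMap (ZMod p) k = ZMod.castHom dvd_rfl k := Subsingleton.elim _ _
  rw [h, ZMod.castHom_apply, ← ZMod.natCast_val]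

lemma smul_mem_subfield (F : Subfield k) (c : ZMod p) {x : k} (hx : x ∈ F) : c • x ∈ F := by
  rw [Algebra.smul_def, algebraMap_eq_natCast p]
  exact F.mul_mem (natCast_mem F _) hx

variable (ψ : Γ →* kˣ)

lemma charRep_single_smul (g : Γ) (c : ZMod p) (x : (charRep p k ψ).asModule) :
    (charRep p k ψ).asModuleEquiv (MonoidAlgebra.single g c • x) =
      c • ((ψ g : k) * (charRep p k ψ).asModuleEquiv x) := by
  rw [Representation.asModuleEquiv_map_smul, Representation.asAlgebraHom_single]
  rfl

/-- the span of the values of `ψ` -/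
abbrev sp : Submodule (ZMod p) k := Submodule.span (ZMod p) (Set.range fun g => ((ψ g : k)))

lemma adjoin_eq_sp :
    (Algebra.adjoin (ZMod p) (Set.range fun g => ((ψ g : k))) : Set k) = (sp p ψ : Set k) := by
  have h1 : Submonoid.closure (Set.range fun g => ((ψ g : k))) =
      MonoidHom.mrange ((Units.coeHom k).comp ψ) := by
    rw [← Submonoid.closure_eq (MonoidHom.mrange ((Units.coeHom k).comp ψ))]
    rfl
  have := Algebra.adjoin_eq_span (R := ZMod p) (s := (Set.range fun g => ((ψ g : k))))
  rw [h1] at this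
  have h2 : ((MonoidHom.mrange ((Units.coeHom k).comp ψ) : Submonoid k) : Set k) =
      Set.range fun g => ((ψ g : k)) := by
    ext x; simp [MonoidHom.mem_mrange]
  calc (Algebra.adjoin (ZMod p) (Set.range fun g => ((ψ g : k))) : Set k)
      = (Subalgebra.toSubmodule (Algebra.adjoin (ZMod p) (Set.range fun g => ((ψ g : k)))) :
        Set k) := rfl
    _ = (sp p ψ : Set k) := by rw [this, h2]

lemma mem_closure_iff_mem_sp (x : k) :
    x ∈ Subfield.closure (Set.range fun g => ((ψ g : k))) ↔ x ∈ sp p ψ := by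
  have key : ∀ y : k, y ∈ sp p ψ ↔ y ∈ Algebra.adjoin (ZMod p)
      (Set.range fun g => ((ψ g : k))) := by
    intro y
    constructor
    · intro hy
      have := adjoin_eq_sp p ψ
      rw [← SetLike.mem_coe, this]; exact hy
    · intro hy
      rw [← SetLike.mem_coe, ← adjoin_eq_sp p ψ]; exact hy
  constructor
  · intro hx
    -- build a subfield structure on the adjoin
    set S := Algebra.adjoin (ZMod p) (Set.range fun g => ((ψ g : k))) with hS
    have inv_mem : ∀ y ∈ S, y⁻¹ ∈ S := by
      intro y hy
      rcases eq_or_ne y 0 with rfl | hy0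
      · simpa using S.zero_mem
      · have : Finite kˣ := inferInstance
        set yb : kˣ := Units.mk0 y hy0 with hyb
        have hord : 0 < orderOf yb := orderOf_pos yb
        have hpow : yb ^ orderOf yb = 1 := pow_orderOf_eq_one yb
        have hk1 : y * y ^ (orderOf yb - 1) = 1 := by
          have : y ^ orderOf yb = 1 := by
            have := congrArg (Units.val) hpow
            rw [Units.val_pow_eq_pow_val, hyb, Units.val_mk0, Units.val_one] at this
            exact this
          rw [← pow_succ', Nat.sub_add_cancel hord]
          exact this
        have : y⁻¹ = y ^ (orderOf yb - 1) := inv_eq_of_mul_eq_one_right hk1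
        rw [this]
        exact pow_mem hy _
    set Sf : Subfield k := { S.toSubring with inv_mem' := inv_mem } with hSf
    have hle : Subfield.closure (Set.range fun g => ((ψ g : k))) ≤ Sf :=
      Subfield.closure_le.mpr (fun y hy => Algebra.subset_adjoin hy)
    have hxS : x ∈ S := hle hx
    rw [key]; exact hxS
  · intro hx
    rw [key] at hx
    refine Algebra.adjoin_induction (fun y hy => Subfield.subset_closure hy)
      (fun r => ?_) (fun a b _ _ ha hb => add_mem ha hb)
      (fun a b _ _ ha hb => mul_mem ha hb) hx
    rw [algebraMap_eq_natCast p]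
    exact natCast_mem _ _


lemma val_mem_sp (g : Γ) : ((ψ g : k)) ∈ sp p ψ := Submodule.subset_span ⟨g, rfl⟩

lemma exists_monoidAlgebra_mul (z : k) (hz : z ∈ sp p ψ) :
    ∃ r : MonoidAlgebra (ZMod p) Γ, ∀ y : (charRep p k ψ).asModule,
      (charRep p k ψ).asModuleEquiv (r • y) = z * (charRep p k ψ).asModuleEquiv y := by
  induction hz using Submodule.span_induction with
  | mem x h =>
      obtain ⟨g, rfl⟩ := h
      exact ⟨MonoidAlgebra.single g 1, fun y => by rw [charRep_single_smul]; simp⟩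
  | zero => exact ⟨0, fun y => by simp [zero_smul]⟩
  | add a b ha hb iha ihb =>
      obtain ⟨r1, h1⟩ := iha; obtain ⟨r2, h2⟩ := ihb
      exact ⟨r1 + r2, fun y => by rw [add_smul, map_add, h1, h2, add_mul]⟩
  | smul c a ha iha =>
      obtain ⟨r, h⟩ := iha
      refine ⟨MonoidAlgebra.single 1 c * r, fun y => ?_⟩
      rw [mul_smul, charRep_single_smul, h]
      simp [smul_mul_assoc]

lemma charRep_smul_eq (r : MonoidAlgebra (ZMod p) Γ) (x : (charRep p k ψ).asModule) :
    (charRep p k ψ).asModuleEquiv (r • x) =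
      r.coeff.sum fun g c => c • ((ψ g : k) * (charRep p k ψ).asModuleEquiv x) := by
  rw [Representation.asModuleEquiv_map_smul, Representation.asAlgebraHom_def,
    MonoidAlgebra.lift_apply]
  simp only [Finsupp.sum, LinearMap.coe_sum, Finset.sum_apply, LinearMap.smul_apply]
  rfl

lemma ringHom_zmod_smul (f : k →+* k) (c : ZMod p) (x : k) : f (c • x) = c • f x := by
  rw [Algebra.smul_def, map_mul, Algebra.smul_def]
  congr 1
  exact RingHom.congr_fun
    (Subsingleton.elim (f.comp (algebraMap (ZMod p) k)) (algebraMap (ZMod p) k)) c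

lemma ringEquiv_zmod_smul (f : k ≃+* k) (c : ZMod p) (x : k) : f (c • x) = c • f x := by
  rw [Algebra.smul_def, map_mul, Algebra.smul_def]
  congr 1
  exact RingHom.congr_fun
    (Subsingleton.elim (f.toRingHom.comp (algebraMap (ZMod p) k)) (algebraMap (ZMod p) k)) c

/-- the submodule of `k(ψ)` given by a subfield closed under the values of `ψ`. -/
def Nsub : Submodule (MonoidAlgebra (ZMod p) Γ) (charRep p k ψ).asModule where
  carrier := {x | (charRep p k ψ).asModuleEquiv x ∈
    Subfield.closure (Set.range fun g => ((ψ g : k)))}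
  add_mem' := fun ha hb => by simpa using add_mem ha hb
  zero_mem' := by
    simp only [Set.mem_setOf_eq, map_zero]
    exact zero_mem _
  smul_mem' := by
    intro r x hx
    rw [Set.mem_setOf_eq, charRep_smul_eq]
    refine Subfield.sum_mem _ (fun g hg => ?_)
    exact smul_mem_subfield p _ _ (mul_mem (Subfield.subset_closure ⟨g, rfl⟩) hx)

lemma mem_Nsub (x : (charRep p k ψ).asModule) :
    x ∈ Nsub p ψ ↔ (charRep p k ψ).asModuleEquiv x ∈
      Subfield.closure (Set.range fun g => ((ψ g : k))) := Iff.rfl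


lemma Nsub_nontrivial : Nontrivial ↥(Nsub p ψ) := by
  refine ⟨⟨(charRep p k ψ).asModuleEquiv.symm 1, ?_⟩, 0, ?_⟩
  · rw [mem_Nsub, LinearEquiv.apply_symm_apply]
    exact one_mem _
  · intro h
    have := congrArg (fun w : ↥(Nsub p ψ) => (charRep p k ψ).asModuleEquiv (w : (charRep p k ψ).asModule)) h
    simp at this

lemma Nsub_simple : IsSimpleModule (MonoidAlgebra (ZMod p) Γ) ↥(Nsub p ψ) := by
  haveI := Nsub_nontrivial p ψ
  rw [isSimpleModule_iff]
  constructor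
  intro P
  rcases eq_or_ne P ⊥ with h | h
  · exact Or.inl h
  refine Or.inr (eq_top_iff.mpr fun w _ => ?_)
  obtain ⟨x, hxP, hx0⟩ := (Submodule.ne_bot_iff P).mp h
  have hxk : (charRep p k ψ).asModuleEquiv (x : (charRep p k ψ).asModule) ≠ 0 := by
    intro h0
    apply hx0
    apply Subtype.ext
    exact (charRep p k ψ).asModuleEquiv.injective (by simpa using h0)
  have hzmem : (charRep p k ψ).asModuleEquiv (w : (charRep p k ψ).asModule) *
      ((charRep p k ψ).asModuleEquiv (x : (charRep p k ψ).asModule))⁻¹ ∈ sp p ψ := by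
    rw [← mem_closure_iff_mem_sp]
    exact mul_mem w.2 (inv_mem x.2)
  obtain ⟨r, hr⟩ := exists_monoidAlgebra_mul p ψ _ hzmem
  have hw : w = r • x := by
    apply Subtype.ext
    apply (charRep p k ψ).asModuleEquiv.injective
    have hcoe : ((r • x : ↥(Nsub p ψ)) : (charRep p k ψ).asModule) =
        r • (x : (charRep p k ψ).asModule) := rfl
    rw [hcoe, hr]
    field_simp
  rw [hw]
  exact P.smul_mem r hxP


variable {β : Γ →* kˣ}

/-- transport along a field automorphism intertwining the two characters. -/
def transportLin (α β : Γ →* kˣ) (τ : k ≃+* k) (hτ : ∀ g, (β g : k) = τ (α g : k)) :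
    (charRep p k α).asModule →ₗ[MonoidAlgebra (ZMod p) Γ] (charRep p k β).asModule where
  toFun x := (charRep p k β).asModuleEquiv.symm (τ ((charRep p k α).asModuleEquiv x))
  map_add' x y := by
    rw [map_add, map_add, map_add]
  map_smul' r x := by
    apply (charRep p k β).asModuleEquiv.injective
    rw [RingHom.id_apply, LinearEquiv.apply_symm_apply, charRep_smul_eq, charRep_smul_eq,
      map_finsuppSum]
    refine Finsupp.sum_congr (fun g hg => ?_)
    rw [ringEquiv_zmod_smul, map_mul, LinearEquiv.apply_symm_apply, ← hτ]

lemma transportLin_inj (α β : Γ →* kˣ) (τ : k ≃+* k) (hτ : ∀ g, (β g : k) = τ (α g : k)) :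
    Function.Injective (transportLin p α β τ hτ) := by
  intro x y h
  apply (charRep p k α).asModuleEquiv.injective
  apply τ.injective
  have := congrArg (charRep p k β).asModuleEquiv h
  simpa [transportLin] using this

lemma reverse_dir (α β : Γ →* kˣ) (τ : k ≃+* k) (hτ : ∀ g, (β g : k) = τ (α g : k)) :
    ∃ N' : Submodule (MonoidAlgebra (ZMod p) Γ) (charRep p k β).asModule,
      Nonempty (↥(Nsub p α) ≃ₗ[MonoidAlgebra (ZMod p) Γ] ↥N') :=
  ⟨(Nsub p α).map (transportLin p α β τ hτ),
    ⟨Submodule.equivMapOfInjective _ (transportLin_inj p α β τ hτ) _⟩⟩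


section Forward

variable (α β : Γ →* kˣ) (N' : Submodule (MonoidAlgebra (ZMod p) Γ) (charRep p k β).asModule)
  (e : ↥(Nsub p α) ≃ₗ[MonoidAlgebra (ZMod p) Γ] ↥N')

/-- the subfield element of `k(α)` attached to `z`. -/
def eln (z : k) (hz : z ∈ Subfield.closure (Set.range fun g => ((α g : k)))) : ↥(Nsub p α) :=
  ⟨(charRep p k α).asModuleEquiv.symm z, by rwa [mem_Nsub, LinearEquiv.apply_symm_apply]⟩

open scoped Classical in
/-- transport of `z ∈ k′` through the module isomorphism `e`. -/
def Wmap (z : k) : k :=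
  if hz : z ∈ Subfield.closure (Set.range fun g => ((α g : k))) then
    (charRep p k β).asModuleEquiv ((e (eln p α z hz) : ↥N') : (charRep p k β).asModule)
  else 0

lemma Wval (z : k) (hz : z ∈ Subfield.closure (Set.range fun g => ((α g : k)))) :
    Wmap p α β N' e z =
      (charRep p k β).asModuleEquiv ((e (eln p α z hz) : ↥N') : (charRep p k β).asModule) :=
  dif_pos hz

lemma Wzero : Wmap p α β N' e 0 = 0 := by
  rw [Wval p α β N' e 0 (zero_mem _)]
  have h0 : eln p α 0 (zero_mem _) = 0 := by
    apply Subtype.ext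
    show (charRep p k α).asModuleEquiv.symm 0 = 0
    exact map_zero _
  rw [h0, map_zero]
  rfl

lemma Wadd (a b : k) (ha : a ∈ Subfield.closure (Set.range fun g => ((α g : k))))
    (hb : b ∈ Subfield.closure (Set.range fun g => ((α g : k)))) :
    Wmap p α β N' e (a + b) = Wmap p α β N' e a + Wmap p α β N' e b := by
  rw [Wval p α β N' e _ (add_mem ha hb), Wval p α β N' e a ha, Wval p α β N' e b hb]
  have h : eln p α (a+b) (add_mem ha hb) = eln p α a ha + eln p α b hb := by
    apply Subtype.ext
    show (charRep p k α).asModuleEquiv.symm (a+b) = _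
    rw [map_add]
    rfl
  rw [h, map_add, Submodule.coe_add, map_add]

lemma Wsingle (g : Γ) (c : ZMod p) (a : k)
    (ha : a ∈ Subfield.closure (Set.range fun g => ((α g : k)))) :
    Wmap p α β N' e (c • ((α g : k) * a)) = c • ((β g : k) * Wmap p α β N' e a) := by
  have hmem : c • ((α g : k) * a) ∈ Subfield.closure (Set.range fun g => ((α g : k))) :=
    smul_mem_subfield p _ c (mul_mem (Subfield.subset_closure ⟨g, rfl⟩) ha)
  rw [Wval p α β N' e _ hmem, Wval p α β N' e a ha]
  have h : eln p α _ hmem = MonoidAlgebra.single g c • eln p α a ha := by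
    apply Subtype.ext
    apply (charRep p k α).asModuleEquiv.injective
    show (charRep p k α).asModuleEquiv ((charRep p k α).asModuleEquiv.symm _) =
      (charRep p k α).asModuleEquiv
        (MonoidAlgebra.single g c • ((charRep p k α).asModuleEquiv.symm a))
    rw [LinearEquiv.apply_symm_apply, charRep_single_smul, LinearEquiv.apply_symm_apply]
  rw [h, map_smul]
  have hco : ((MonoidAlgebra.single g c • e (eln p α a ha) : ↥N') :
      (charRep p k β).asModule) = MonoidAlgebra.single g c •
      ((e (eln p α a ha) : ↥N') : (charRep p k β).asModule) := rfl
  rw [hco, charRep_single_smul]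

lemma Wsmul (c : ZMod p) (a : k)
    (ha : a ∈ Subfield.closure (Set.range fun g => ((α g : k)))) :
    Wmap p α β N' e (c • a) = c • Wmap p α β N' e a := by
  have := Wsingle p α β N' e 1 c a ha
  simpa using this

lemma Wg (g : Γ) (a : k)
    (ha : a ∈ Subfield.closure (Set.range fun g => ((α g : k)))) :
    Wmap p α β N' e ((α g : k) * a) = (β g : k) * Wmap p α β N' e a := by
  have := Wsingle p α β N' e g 1 a ha
  simpa using this

lemma Wvalg (g : Γ) :
    Wmap p α β N' e ((α g : k)) = (β g : k) * Wmap p α β N' e 1 := by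
  conv_lhs => rw [← mul_one ((α g : k))]
  rw [Wg p α β N' e g 1 (one_mem _)]

lemma Wmul (a : k) (ha : a ∈ sp p α) :
    ∀ b ∈ Subfield.closure (Set.range fun g => ((α g : k))),
      Wmap p α β N' e (a * b) * Wmap p α β N' e 1 =
        Wmap p α β N' e a * Wmap p α β N' e b := by
  induction ha using Submodule.span_induction with
  | mem x hx =>
      obtain ⟨g, rfl⟩ := hx
      intro b hb
      rw [Wg p α β N' e g b hb, Wvalg p α β N' e g]
      ring
  | zero =>
      intro b hb
      rw [zero_mul, Wzero p α β N' e, zero_mul, zero_mul]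
  | add x y hx hy ihx ihy =>
      intro b hb
      have hx' : x ∈ Subfield.closure (Set.range fun g => ((α g : k))) :=
        (mem_closure_iff_mem_sp p α x).mpr hx
      have hy' : y ∈ Subfield.closure (Set.range fun g => ((α g : k))) :=
        (mem_closure_iff_mem_sp p α y).mpr hy
      rw [add_mul, Wadd p α β N' e _ _ (mul_mem hx' hb) (mul_mem hy' hb),
        Wadd p α β N' e x y hx' hy', add_mul, add_mul, ihx b hb, ihy b hb]
  | smul c x hx ih =>
      intro b hb
      have hx' : x ∈ Subfield.closure (Set.range fun g => ((α g : k))) :=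
        (mem_closure_iff_mem_sp p α x).mpr hx
      rw [smul_mul_assoc, Wsmul p α β N' e c _ (mul_mem hx' hb),
        Wsmul p α β N' e c x hx', smul_mul_assoc, smul_mul_assoc, ih b hb]

lemma Wone_ne_zero : Wmap p α β N' e 1 ≠ 0 := by
  intro h0
  rw [Wval p α β N' e 1 (one_mem _)] at h0
  have h1 : ((e (eln p α 1 (one_mem _)) : ↥N') : (charRep p k β).asModule) = 0 := by
    apply (charRep p k β).asModuleEquiv.injective
    simpa using h0
  have h2 : e (eln p α 1 (one_mem _)) = 0 := Subtype.ext h1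
  have h3 : eln p α 1 (one_mem _) = 0 := by
    simpa using e.map_eq_zero_iff.mp h2
  have h4 : (1 : k) = 0 := by
    have h5 := congrArg
      (fun w : ↥(Nsub p α) => (charRep p k α).asModuleEquiv (w : (charRep p k α).asModule)) h3
    simpa [eln] using h5
  exact one_ne_zero h4

include N' e in
lemma forward_dir : ∃ τ : k ≃+* k, ∀ g : Γ, (β g : k) = τ (α g : k) := by
  have hu : Wmap p α β N' e 1 ≠ 0 := Wone_ne_zero p α β N' e
  have halg : ∀ c : ZMod p,
      algebraMap (ZMod p) k c ∈ Subfield.closure (Set.range fun g => ((α g : k))) := fun c => by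
    rw [algebraMap_eq_natCast p]; exact natCast_mem _ _
  let K : IntermediateField (ZMod p) k :=
    Subfield.toIntermediateField (Subfield.closure (Set.range fun g => ((α g : k)))) halg
  have hmemK : ∀ z : K, (z : k) ∈ Subfield.closure (Set.range fun g => ((α g : k))) :=
    fun z => z.2
  let τ0 : K →+* k :=
  { toFun := fun z => (Wmap p α β N' e 1)⁻¹ * Wmap p α β N' e z.1
    map_one' := by
      show (Wmap p α β N' e 1)⁻¹ * Wmap p α β N' e 1 = 1
      rw [inv_mul_cancel₀ hu]
    map_mul' := fun z w => by
      have h := Wmul p α β N' e z.1 ((mem_closure_iff_mem_sp p α _).mp (hmemK z)) w.1 (hmemK w)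
      show (Wmap p α β N' e 1)⁻¹ * Wmap p α β N' e (z.1 * w.1) = _
      rw [mul_mul_mul_comm, ← h]
      field_simp
    map_zero' := by
      show (Wmap p α β N' e 1)⁻¹ * Wmap p α β N' e 0 = 0
      rw [Wzero p α β N' e, mul_zero]
    map_add' := fun z w => by
      show (Wmap p α β N' e 1)⁻¹ * Wmap p α β N' e (z.1 + w.1) = _
      rw [Wadd p α β N' e z.1 w.1 (hmemK z) (hmemK w), mul_add] }
  have hsmul : ∀ (c : ZMod p) (z : K), τ0 (c • z) = c • τ0 z := by
    intro c z
    show (Wmap p α β N' e 1)⁻¹ * Wmap p α β N' e (c • z.1) =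
      c • ((Wmap p α β N' e 1)⁻¹ * Wmap p α β N' e z.1)
    rw [Wsmul p α β N' e c z.1 (hmemK z), mul_smul_comm]
  let A : K →ₐ[ZMod p] k := AlgHom.mk' τ0 hsmul
  let τA := A.liftNormal k
  have hbij : Function.Bijective τA :=
    Finite.injective_iff_bijective.mp τA.toRingHom.injective
  refine ⟨RingEquiv.ofBijective τA.toRingHom hbij, fun g => ?_⟩
  show (β g : k) = τA ((α g : k))
  have hmem : ((α g : k)) ∈ K := Subfield.subset_closure ⟨g, rfl⟩
  have hcoe : ((α g : k)) = algebraMap K k (⟨(α g : k), hmem⟩ : K) := rfl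
  rw [hcoe, AlgHom.liftNormal_commutes]
  show (β g : k) = algebraMap k k (τ0 ⟨(α g : k), hmem⟩)
  show (β g : k) = algebraMap k k ((Wmap p α β N' e 1)⁻¹ * Wmap p α β N' e ((α g : k)))
  rw [Wvalg p α β N' e g]
  field_simp
  rfl

end Forward

end Stmt6

/-- let `Γ` be a group, `k` a finite field of characteristic `p`, and
`α : Γ → kˣ` a character.  Let `k′ ⊆ k` be the subfield generated by the values of
`α`.  Then `k′(α)` is a simple `F_p[Γ]`-module, and for any character `β : Γ → kˣ`,
`k′(α)` embeds as an `F_p[Γ]`-submodule of `k(β)` if and only if `β = τ ∘ α` for some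
field automorphism `τ` of `k`. -/
theorem statement6
    (p : ℕ) [Fact p.Prime]
    (Γ : Type) [Group Γ]
    (k : Type) [Field k] [Finite k] [CharP k p] [Algebra (ZMod p) k]
    (α : Γ →* kˣ)
    -- `k′`: the subfield of `k` generated by the values of `α`
    (k' : Subfield k) (hk' : k' = Subfield.closure (Set.range fun g => ((α g : k)))) :
    ∃ N : Submodule (MonoidAlgebra (ZMod p) Γ) (charRep p k α).asModule,
      (∀ x : (charRep p k α).asModule, x ∈ N ↔ ((charRep p k α).asModuleEquiv x) ∈ k') ∧
      IsSimpleModule (MonoidAlgebra (ZMod p) Γ) ↥N ∧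
      ∀ β : Γ →* kˣ,
        ((∃ N' : Submodule (MonoidAlgebra (ZMod p) Γ) (charRep p k β).asModule,
            Nonempty (↥N ≃ₗ[MonoidAlgebra (ZMod p) Γ] ↥N')) ↔
          ∃ τ : k ≃+* k, ∀ g : Γ, (β g : k) = τ (α g : k)) := by
  
  subst hk'
  refine ⟨Stmt6.Nsub p α, fun x => Iff.rfl, Stmt6.Nsub_simple p α, fun β => ?_⟩
  constructor
  · rintro ⟨N', ⟨e⟩⟩
    exact Stmt6.forward_dir p α β N' e
  · rintro ⟨τ, hτ⟩
    exact Stmt6.reverse_dir p α β τ hτ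
end
end

section
/- Let L = F(ζ_p) ∩ K(γ̄). If gcd-type condition (#ε(G_L), #γ̄(G_L)) > 1 holds — i.e. the images ε(G_L) and γ̄(G_L) have a common nontrivial divisor of their orders, in particular both are nontrivial — then F(ζ_p) ⊄ K(γ̄ε) ∩ K(γ̄ε^{−1}). -/
set_option linter.unusedVariables false
set_option synthInstance.maxHeartbeats 1000000
set_option maxHeartbeats 4000000



noncomputable section
open Polynomial

/-- The absolute Galois group of a field `F`. -/
abbrev Gal (F : Type*) [Field F] : Type _ := AlgebraicClosure F ≃ₐ[F] AlgebraicClosure F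

/-- The canonical map from the absolute Galois group to ring automorphisms. -/
def galToRingAut (F : Type*) [Field F] :
    Gal F →* (AlgebraicClosure F ≃+* AlgebraicClosure F) where
  toFun σ := σ.toRingEquiv
  map_one' := rfl
  map_mul' _ _ := rfl

/-- The mod `p` cyclotomic character `ε` of the absolute Galois group of `F`. -/
def modCyc (F : Type*) [Field F] (p : ℕ) [NeZero p]
    (hcard : Nat.card (rootsOfUnity p (AlgebraicClosure F)) = p) :
    Gal F →* (ZMod p)ˣ :=
  (modularCyclotomicCharacter (AlgebraicClosure F) hcard).comp (galToRingAut F)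

/-- The inclusion `F_p^× → k^×` for a ring `k` of characteristic `p`. -/
def unitsToField (k : Type*) [CommRing k] (p : ℕ) [CharP k p] : (ZMod p)ˣ →* kˣ :=
  Units.map (ZMod.castHom dvd_rfl k).toMonoidHom

/-- `K(ψ)`: the fixed field of the kernel of a character `ψ` of `G_K = Gal(Ω/K)`,
regarded as an intermediate field of `Ω/F`. -/
def charFixedField {F : Type*} [Field F] (K : IntermediateField F (AlgebraicClosure F))
    {A : Type*} [CommGroup A] (ψ : ↥K.fixingSubgroup →* A) :
    IntermediateField F (AlgebraicClosure F) :=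
  IntermediateField.fixedField ((ψ.ker).map K.fixingSubgroup.subtype)

/-- Functoriality of `GL₂` along a ring homomorphism. -/
def mapGL {R S : Type*} [CommRing R] [CommRing S] (f : R →+* S) :
    GL (Fin 2) R →* GL (Fin 2) S :=
  Units.map (RingHom.toMonoidHom f.mapMatrix)

/-- A number field is totally real if all of its infinite places are real. -/
def TotallyReal (F : Type*) [Field F] [NumberField F] : Prop :=
  ∀ v : NumberField.InfinitePlace F, v.IsReal

/-- The finite places of a number field `F`. -/
abbrev Place (F : Type*) [Field F] [NumberField F] : Type _ :=
  IsDedekindDomain.HeightOneSpectrum (NumberField.RingOfIntegers F)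

/-- The cardinality `q_v` of the residue field at a finite place `v`. -/
def qv {F : Type*} [Field F] [NumberField F] (v : Place F) : ℕ :=
  Ideal.absNorm v.asIdeal

/-- If `σ` fixes a primitive `p`-th root of unity, then `ε σ = 1`. -/
theorem aux_eps_eq_one {p : ℕ} [Fact p.Prime] {F : Type} [Field F]
    (hcard : Nat.card (rootsOfUnity p (AlgebraicClosure F)) = p)
    {ζ : AlgebraicClosure F} (hζ : IsPrimitiveRoot ζ p) {σ : Gal F} (h : σ ζ = ζ) :
    modCyc F p hcard σ = 1 := by
  have hp : p.Prime := Fact.out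
  have key := modularCyclotomicCharacter.spec (AlgebraicClosure F) hcard (galToRingAut F σ)
    (SetLike.coe_mem hζ.toRootsOfUnity)
  rw [hζ.val_toRootsOfUnity_coe] at key
  have key' : σ ζ = ζ ^ ((modCyc F p hcard σ : ZMod p)).val := key
  have hval : ((modCyc F p hcard σ : ZMod p)).val = 1 := by
    refine hζ.pow_inj (ZMod.val_lt _) hp.one_lt ?_
    rw [pow_one, ← key', h]
  have hcast : ((modCyc F p hcard σ : ZMod p)) = 1 := by
    have := congrArg (Nat.cast : ℕ → ZMod p) hval
    rwa [ZMod.natCast_val, ZMod.cast_id, Nat.cast_one] at this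
  exact Units.ext hcast

/-- Key Galois-theoretic step: any element of `G_{E ⊓ K(γ)}` has the same `γ`-value as some
element of `G_E ∩ G_K`. -/
theorem aux_gamma_val {F : Type} [Field F] [NumberField F]
    (E : IntermediateField F (AlgebraicClosure F))
    [Normal F ↥E] [FiniteDimensional F ↥E]
    (K : IntermediateField F (AlgebraicClosure F))
    (k : Type) [Field k] (γ : ↥K.fixingSubgroup →* kˣ)
    (L : IntermediateField F (AlgebraicClosure F))
    (hL : L = E ⊓ charFixedField K γ)
    (s : ↥K.fixingSubgroup) (hs : (s : Gal F) ∈ L.fixingSubgroup) :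
    ∃ t : ↥K.fixingSubgroup, (t : Gal F) ∈ E.fixingSubgroup ∧ γ t = γ s := by
  set res := AlgEquiv.restrictNormalHom (F := F) (K₁ := AlgebraicClosure F) ↥E with hres
  set H : Subgroup (Gal F) := (γ.ker).map K.fixingSubgroup.subtype with hH
  have hmem : res (s : Gal F) ∈ H.map res := by
    rw [← IntermediateField.fixingSubgroup_fixedField (H.map res),
      IntermediateField.mem_fixingSubgroup_iff]
    intro x hx
    have hx' : ∀ g : ↥(H.map res), g • x = x := hx
    have hxL : (x : AlgebraicClosure F) ∈ L := by
      rw [hL]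
      refine ⟨x.2, ?_⟩
      rintro ⟨g, hg⟩
      obtain ⟨gt, hgker, rfl⟩ := hg
      have h1 : res ((gt : Gal F)) x = x :=
        hx' ⟨res (gt : Gal F), Subgroup.mem_map.mpr
          ⟨(gt : Gal F), Subgroup.mem_map.mpr ⟨gt, hgker, rfl⟩, rfl⟩⟩
      have h2 : ((res (gt : Gal F) x : ↥E) : AlgebraicClosure F)
          = (gt : Gal F) (x : AlgebraicClosure F) :=
        AlgEquiv.restrictNormalHom_apply E (gt : Gal F) x
      exact show (gt : Gal F) (x : AlgebraicClosure F) = (x : AlgebraicClosure F) by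
        rw [← h2, h1]
    have h3 : (s : Gal F) (x : AlgebraicClosure F) = (x : AlgebraicClosure F) :=
      (IntermediateField.mem_fixingSubgroup_iff L ((s : Gal F))).mp hs _ hxL
    have h4 : ((res (s : Gal F) x : ↥E) : AlgebraicClosure F)
        = (s : Gal F) (x : AlgebraicClosure F) :=
      AlgEquiv.restrictNormalHom_apply E ((s : Gal F)) x
    exact Subtype.ext (by rw [h4, h3])
  obtain ⟨g, hgH, hgres⟩ := Subgroup.mem_map.mp hmem
  obtain ⟨gt, hgker, rfl⟩ := hgH
  have hgres' : res ((gt : Gal F)) = res ((s : Gal F)) := hgres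
  refine ⟨s * gt⁻¹, ?_, ?_⟩
  · rw [IntermediateField.mem_fixingSubgroup_iff]
    intro x hxE
    have h5 : res (((s * gt⁻¹ : ↥K.fixingSubgroup) : Gal F)) = 1 := by
      push_cast
      rw [map_mul, map_inv, hgres', mul_inv_cancel]
    have h6 : ((res (((s * gt⁻¹ : ↥K.fixingSubgroup) : Gal F)) ⟨x, hxE⟩ : ↥E)
        : AlgebraicClosure F) = ((s * gt⁻¹ : ↥K.fixingSubgroup) : Gal F) x :=
      AlgEquiv.restrictNormalHom_apply E _ ⟨x, hxE⟩
    rw [h5] at h6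
    simpa using h6.symm
  · rw [map_mul, map_inv, show γ gt = 1 from hgker, inv_one, mul_one]

/-- with `L = F(ζ_p) ∩ K(γ̄)`, if the orders of the images `ε(G_L)` and
`γ̄(G_L)` have a nontrivial common divisor (i.e. their gcd is `> 1`), then
`F(ζ_p) ⊄ K(γ̄ε) ∩ K(γ̄ε⁻¹)`. -/
theorem statement10
    (p : ℕ) [Fact p.Prime] (hpodd : Odd p)
    (F : Type) [Field F] [NumberField F] (hF : TotallyReal F)
    (hcard : Nat.card (rootsOfUnity p (AlgebraicClosure F)) = p)
    (ζ : AlgebraicClosure F) (hζ : IsPrimitiveRoot ζ p)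
    -- `K` is the unique quadratic subfield of `F(ζ_p)/F`
    (K : IntermediateField F (AlgebraicClosure F))
    (hKζ : K ≤ IntermediateField.adjoin F {ζ}) (hK2 : Module.finrank F K = 2)
    (hsub : (IntermediateField.adjoin F {ζ}).fixingSubgroup ≤ K.fixingSubgroup)
    -- the coefficient field `k`
    (k : Type) [Field k] [Finite k] [CharP k p]
    -- a character `γ̄` of `G_K`, nontrivial on `G_{F(ζ_p)}`
    (γ : ↥K.fixingSubgroup →* kˣ)
    (hγ : ∃ σ : Gal F, ∃ hσ : σ ∈ (IntermediateField.adjoin F {ζ}).fixingSubgroup,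
      γ ⟨σ, hsub hσ⟩ ≠ 1)
    -- `L = F(ζ_p) ∩ K(γ̄)`
    (L : IntermediateField F (AlgebraicClosure F))
    (hL : L = IntermediateField.adjoin F {ζ} ⊓ charFixedField K γ)
    -- hypothesis: `(#ε(G_L), #γ̄(G_L)) > 1`
    (hgcd : 1 < Nat.gcd
      (Nat.card (Subgroup.map (modCyc F p hcard) L.fixingSubgroup))
      (Nat.card (Subgroup.map γ (Subgroup.comap K.fixingSubgroup.subtype L.fixingSubgroup)))) :
    -- conclusion
    ¬ IntermediateField.adjoin F {ζ} ≤
        charFixedField K (γ * ((unitsToField k p).comp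
          ((modCyc F p hcard).comp K.fixingSubgroup.subtype))) ⊓
        charFixedField K (γ * ((unitsToField k p).comp
          ((modCyc F p hcard).comp K.fixingSubgroup.subtype))⁻¹) := by
  intro hcontra
  have hp : p.Prime := Fact.out
  -- instances on `E = F(ζ)`
  have hint : IsIntegral F ζ := IsAlgebraic.isIntegral (Algebra.IsAlgebraic.isAlgebraic ζ)
  set pn : ℕ+ := ⟨p, hp.pos⟩ with hpn
  have hζ' : IsPrimitiveRoot ζ ((pn : ℕ)) := hζ
  have Hsub := IntermediateField.adjoin_simple_toSubalgebra_of_isAlgebraic hint.isAlgebraic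
  haveI hcyc : IsCyclotomicExtension {(pn : ℕ)} F ↥(IntermediateField.adjoin F {ζ}) := by
    refine IsCyclotomicExtension.equiv _ _ _ (h := ?_)
      (.refl : (IntermediateField.adjoin F {ζ}).toSubalgebra ≃ₐ[F] _)
    rw [Hsub]
    exact hζ'.adjoin_isCyclotomicExtension F
  haveI : FiniteDimensional F ↥(IntermediateField.adjoin F {ζ}) :=
    IsCyclotomicExtension.finiteDimensional {(pn : ℕ)} F _
  haveI : IsGalois F ↥(IntermediateField.adjoin F {ζ}) :=
    IsCyclotomicExtension.isGalois {(pn : ℕ)} F _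
  -- notation
  set ε := modCyc F p hcard with hε
  set ι := unitsToField k p with hι
  set χ := ι.comp (ε.comp K.fixingSubgroup.subtype) with hχ
  -- `K ≤ L`, so `G_L ≤ G_K`
  have hKγ : K ≤ charFixedField K γ :=
    (IntermediateField.le_iff_le _ _).mpr (Subgroup.map_subtype_le γ.ker)
  have hKL : K ≤ L := by rw [hL]; exact le_inf hKζ hKγ
  have hLKfix : L.fixingSubgroup ≤ K.fixingSubgroup :=
    IntermediateField.fixingSubgroup_antitone hKL
  -- a common prime divisor ℓ
  obtain ⟨ℓ, hℓprime, hℓdvd⟩ := Nat.exists_prime_and_dvd hgcd.ne'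
  haveI := Fact.mk hℓprime
  haveI : NeZero ℓ := ⟨hℓprime.pos.ne'⟩
  have hdA : ℓ ∣ Nat.card (Subgroup.map ε L.fixingSubgroup) :=
    hℓdvd.trans (Nat.gcd_dvd_left _ _)
  have hdB : ℓ ∣ Nat.card
      (Subgroup.map γ (Subgroup.comap K.fixingSubgroup.subtype L.fixingSubgroup)) :=
    hℓdvd.trans (Nat.gcd_dvd_right _ _)
  -- an element of order ℓ in ε(G_L)
  obtain ⟨abar, habarord⟩ := exists_prime_orderOf_dvd_card' (G := ↥(Subgroup.map ε L.fixingSubgroup))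
    ℓ hdA
  have habarG : orderOf ((abar : (ZMod p)ˣ)) = ℓ := by
    rw [Subgroup.orderOf_coe]; exact habarord
  obtain ⟨σ₁, hσ₁L, hσ₁⟩ := Subgroup.mem_map.mp abar.2
  -- an element of order ℓ in γ(G_L)
  obtain ⟨bbar, hbbarord⟩ := exists_prime_orderOf_dvd_card'
    (G := ↥(Subgroup.map γ (Subgroup.comap K.fixingSubgroup.subtype L.fixingSubgroup))) ℓ hdB
  have hbbarG : orderOf ((bbar : kˣ)) = ℓ := by
    rw [Subgroup.orderOf_coe]; exact hbbarord
  -- `a = ι(abar)` has order ℓ in kˣ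
  have hιinj : Function.Injective ι := by
    rw [hι, unitsToField]
    exact Units.map_injective (ZMod.castHom dvd_rfl k).injective
  set a := ι ((abar : (ZMod p)ˣ)) with ha
  have horda : orderOf a = ℓ := by rw [ha, orderOf_injective ι hιinj, habarG]
  -- `a` lies in γ(G_L) since it is a power of `bbar`
  have hbprim : IsPrimitiveRoot ((bbar : kˣ) : k) ℓ :=
    IsPrimitiveRoot.coe_units_iff.mpr (hbbarG ▸ IsPrimitiveRoot.orderOf ((bbar : kˣ)))
  have hapow : ((a : kˣ) : k) ^ ℓ = 1 := by
    rw [← Units.val_pow_eq_pow_val, ← horda, pow_orderOf_eq_one, Units.val_one]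
  obtain ⟨i, hiℓ, hi⟩ := hbprim.eq_pow_of_pow_eq_one hapow
  have haB : a ∈ Subgroup.map γ (Subgroup.comap K.fixingSubgroup.subtype L.fixingSubgroup) := by
    have : (bbar : kˣ) ^ i = a := Units.ext (by rw [Units.val_pow_eq_pow_val, hi])
    exact this ▸ Subgroup.pow_mem _ bbar.2 i
  -- `b = γ(σ₁)` lies in γ(G_L)
  set σ₁el : ↥K.fixingSubgroup := ⟨σ₁, hLKfix hσ₁L⟩ with hσ₁el
  set b := γ σ₁el with hb
  have hbB : b ∈ Subgroup.map γ (Subgroup.comap K.fixingSubgroup.subtype L.fixingSubgroup) :=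
    Subgroup.mem_map.mpr ⟨σ₁el, Subgroup.mem_comap.mpr hσ₁L, rfl⟩
  -- choose `s ∈ G_L` with `γ s = a⁻¹ b⁻¹`, and replace it by `t ∈ G_E ∩ G_K`
  have hxB : a⁻¹ * b⁻¹ ∈
      Subgroup.map γ (Subgroup.comap K.fixingSubgroup.subtype L.fixingSubgroup) :=
    Subgroup.mul_mem _ (Subgroup.inv_mem _ haB) (Subgroup.inv_mem _ hbB)
  obtain ⟨s, hscomap, hγs⟩ := Subgroup.mem_map.mp hxB
  obtain ⟨t, htE, hγt⟩ := aux_gamma_val (IntermediateField.adjoin F {ζ}) K k γ L hL s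
    (Subgroup.mem_comap.mp hscomap)
  have hγt' : γ t = a⁻¹ * b⁻¹ := by rw [hγt, hγs]
  have htζ : (t : Gal F) ζ = ζ :=
    (IntermediateField.mem_fixingSubgroup_iff _ _).mp htE ζ
      (IntermediateField.mem_adjoin_simple_self F ζ)
  have hεt : ε ((t : Gal F)) = 1 := aux_eps_eq_one hcard hζ htζ
  -- the element `σ₃ = σ₁ t` kills `γ · ε` but not `ε`
  set σ₃ : ↥K.fixingSubgroup := σ₁el * t with hσ₃
  have hγσ₃ : γ σ₃ = a⁻¹ := by
    rw [hσ₃, map_mul, ← hb, hγt', mul_comm a⁻¹ b⁻¹, ← mul_assoc, mul_inv_cancel, one_mul]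
  have hεσ₃ : ε ((σ₃ : Gal F)) = (abar : (ZMod p)ˣ) := by
    have hcoe : ((σ₃ : Gal F)) = σ₁ * (t : Gal F) := rfl
    rw [hcoe, map_mul, hσ₁, hεt, mul_one]
  have hχσ₃ : χ σ₃ = a := by
    have : χ σ₃ = ι (ε ((σ₃ : Gal F))) := rfl
    rw [this, hεσ₃, ha]
  have hψσ₃ : (γ * χ) σ₃ = 1 := by
    rw [MonoidHom.mul_apply, hγσ₃, hχσ₃, inv_mul_cancel]
  -- contradiction via the hypothesis `F(ζ) ≤ K(γε)`
  have h1 : IntermediateField.adjoin F {ζ} ≤ charFixedField K (γ * χ) :=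
    le_trans hcontra inf_le_left
  have h1' : ((γ * χ).ker.map K.fixingSubgroup.subtype)
      ≤ (IntermediateField.adjoin F {ζ}).fixingSubgroup :=
    (IntermediateField.le_iff_le _ _).mp h1
  have hσ₃E : ((σ₃ : Gal F)) ∈ (IntermediateField.adjoin F {ζ}).fixingSubgroup :=
    h1' (Subgroup.mem_map.mpr ⟨σ₃, hψσ₃, rfl⟩)
  have hσ₃ζ : ((σ₃ : Gal F)) ζ = ζ :=
    (IntermediateField.mem_fixingSubgroup_iff _ _).mp hσ₃E ζ
      (IntermediateField.mem_adjoin_simple_self F ζ)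
  have hεσ₃' : ε ((σ₃ : Gal F)) = 1 := aux_eps_eq_one hcard hζ hσ₃ζ
  have habar1 : ((abar : (ZMod p)ˣ)) = 1 := by rw [← hεσ₃, hεσ₃']
  have : (1 : ℕ) = ℓ := by rw [← habarG, habar1, orderOf_one]
  exact hℓprime.one_lt.ne' this.symm
end
end
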